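/- For the Fibonacci-Narayana quaternions U_n in H(β₁,β₂), ∑_{m=0}^{n} U_m = U_{n+3} − U_2 for all n ≥ 0. -/

import Mathlib

open scoped Quaternion

/-- The Fibonacci-Narayana sequence. -/
def narayana : ℕ → ℤ
  | 0 => 0
  | 1 => 1
  | 2 => 1
  | n + 3 => narayana (n + 2) + narayana n

/-- The `n`th Fibonacci-Narayana quaternion in `H(β₁, β₂) = ℍ[ℝ, -β₁, -β₂]`. -/
def narayanaQuat (β₁ β₂ : ℝ) (n : ℕ) : ℍ[ℝ, -β₁, -β₂] :=
  ⟨(narayana n : ℝ), (narayana (n + 1) : ℝ), (narayana (n + 2) : ℝ),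
    (narayana (n + 3) : ℝ)⟩

lemma nar_rec' (k : ℕ) :
    (narayana (k + 3) : ℝ) + narayana (k + 1) = narayana (k + 4) := by
  have : narayana (k + 4) = narayana (k + 3) + narayana (k + 1) := rfl
  rw [this]; push_cast; ring

lemma narayanaQuat_rec (β₁ β₂ : ℝ) (n : ℕ) :
    narayanaQuat β₁ β₂ (n + 3) + narayanaQuat β₁ β₂ (n + 1) =
      narayanaQuat β₁ β₂ (n + 4) := by
  simp only [narayanaQuat, QuaternionAlgebra.mk_add_mk]
  ext
  · exact nar_rec' n
  · exact nar_rec' (n + 1)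
  · exact nar_rec' (n + 2)
  · exact nar_rec' (n + 3)

theorem narayanaQuat_sum (β₁ β₂ : ℝ) (n : ℕ) :
    ∑ m ∈ Finset.range (n + 1), narayanaQuat β₁ β₂ m =
      narayanaQuat β₁ β₂ (n + 3) - narayanaQuat β₁ β₂ 2 := by
  induction n with
  | zero =>
    rw [Finset.sum_range_one]
    ext <;> simp [narayanaQuat] <;>
      norm_num [show narayana 0 = 0 from rfl, show narayana 1 = 1 from rfl,
        show narayana 2 = 1 from rfl, show narayana 3 = 1 from rfl,
        show narayana 4 = 2 from rfl, show narayana 5 = 3 from rfl,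
        show narayana 6 = 4 from rfl]
  | succ n ih =>
    rw [Finset.sum_range_succ, ih, sub_add_eq_add_sub,
      show n + 1 + 3 = n + 4 from rfl, narayanaQuat_rec]
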